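/- Let k be a field of characteristic 2 and R = k[X,Y,Z]/(X² + Y³ + Z⁵), graded by deg X = 15, deg Y = 10, deg Z = 6. Then there is an isomorphism of graded R-modules Syz_R(X², Y², Z²) ≅ R(-30) ⊕ R(-32). -/

import Mathlib

set_option maxHeartbeats 1000000
set_option synthInstance.maxHeartbeats 1000000

/-- The linear map `(a₁,…,aₙ) ↦ Σ aᵢ·gᵢ`; the syzygy module
`Syz_R(g₁,…,gₙ)` is its kernel. -/
noncomputable def syzMap {R : Type*} [CommRing R] {n : ℕ} (g : Fin n → R) :
    (Fin n → R) →ₗ[R] R :=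
  ∑ i, (LinearMap.proj i : (Fin n → R) →ₗ[R] R).smulRight (g i)

/-- `v` is a homogeneous element whose components lie in the graded pieces
`𝒜 e₀, 𝒜 e₁, 𝒜 e₂`. -/
def pieceCond {k R : Type*} [Semiring k] [AddCommMonoid R] [Module k R]
    (𝒜 : ℤ → Submodule k R) (e0 e1 e2 : ℤ) (v : Fin 3 → R) : Prop :=
  v 0 ∈ 𝒜 e0 ∧ v 1 ∈ 𝒜 e1 ∧ v 2 ∈ 𝒜 e2

set_option maxRecDepth 4000
set_option linter.unusedSectionVars false
set_option linter.unusedVariables false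

section Aux
open MvPolynomial
noncomputable section
variable (k : Type*) [Field k] [CharP k 2]

lemma primeX1 : Prime (X 1 : MvPolynomial (Fin 2) k) := by
  let e : MvPolynomial (Fin 2) k ≃ₐ[k] Polynomial (MvPolynomial (Fin 1) k) :=
    (renameEquiv k (Equiv.swap 0 1)).trans (finSuccEquiv k 1)
  rw [← MulEquiv.prime_iff e.toMulEquiv]
  have h1 : e.toMulEquiv (X 1) = Polynomial.X := by
    show e (X 1) = Polynomial.X
    have : (Equiv.swap (0:Fin 2) 1) 1 = 0 := by decide
    simp [e, renameEquiv_apply, rename_X, this, finSuccEquiv_X_zero]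
  rw [h1]; exact Polynomial.prime_X

lemma X1_not_dvd_X0 : ¬ (X 1 : MvPolynomial (Fin 2) k) ∣ X 0 := by
  intro ⟨w, hw⟩
  have := congrArg (eval (fun i : Fin 2 => if i = 0 then (1:k) else 0)) hw
  simp at this

lemma htwoA : (2 : MvPolynomial (Fin 2) k) = 0 := by
  have : ((2:ℕ) : MvPolynomial (Fin 2) k) = 0 := CharP.cast_eq_zero _ 2
  exact_mod_cast this

lemma keyA (a b c : MvPolynomial (Fin 2) k)
    (h : a * (X 0 ^ 3 + X 1 ^ 5) = b * X 0 ^ 2 + c * X 1 ^ 2) :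
    ∃ t, b = a * X 0 + t * X 1 ^ 2 ∧ c = a * X 1 ^ 3 + t * X 0 ^ 2 := by
  have hp : Prime (X 1 : MvPolynomial (Fin 2) k) := primeX1 k
  have h2 : (b - a * X 0) * X 0 ^ 2 = -((c - a * X 1 ^ 3) * X 1 ^ 2) := by
    linear_combination -h
  have hdvd1 : (X 1 : MvPolynomial (Fin 2) k) ∣ (b - a * X 0) * X 0 ^ 2 :=
    ⟨-((c - a * X 1 ^ 3) * X 1), by linear_combination h2⟩
  have hd1 : (X 1 : MvPolynomial (Fin 2) k) ∣ (b - a * X 0) := by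
    rcases hp.2.2 (b - a * X 0) (X 0 ^ 2) hdvd1 with h' | h'
    · exact h'
    · exact absurd (hp.dvd_of_dvd_pow h') (X1_not_dvd_X0 k)
  obtain ⟨u', hu'⟩ := hd1
  have h3 : u' * X 0 ^ 2 = -((c - a * X 1 ^ 3) * X 1) :=
    mul_left_cancel₀ hp.ne_zero (by linear_combination h2 - X 0 ^ 2 * hu')
  have hdvd2 : (X 1 : MvPolynomial (Fin 2) k) ∣ u' * X 0 ^ 2 :=
    ⟨-(c - a * X 1 ^ 3), by linear_combination h3⟩
  have hd2 : (X 1 : MvPolynomial (Fin 2) k) ∣ u' := by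
    rcases hp.2.2 u' (X 0 ^ 2) hdvd2 with h' | h'
    · exact h'
    · exact absurd (hp.dvd_of_dvd_pow h') (X1_not_dvd_X0 k)
  obtain ⟨t, ht⟩ := hd2
  have h4 : c - a * X 1 ^ 3 = -(t * X 0 ^ 2) :=
    mul_left_cancel₀ hp.ne_zero (by linear_combination h3 - X 0 ^ 2 * ht)
  refine ⟨t, ?_, ?_⟩
  · linear_combination hu' + X 1 * ht
  · linear_combination h4 - t * X 0 ^ 2 * htwoA k


def fA : MvPolynomial (Fin 2) k := X 0 ^ 3 + X 1 ^ 5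
def GP : Polynomial (MvPolynomial (Fin 2) k) := Polynomial.X ^ 2 + Polynomial.C (fA k)
def FP : MvPolynomial (Fin 3) k := X 0 ^ 2 + X 1 ^ 3 + X 2 ^ 5

lemma monicG : (GP k).Monic := by
  rw [GP]; exact Polynomial.monic_X_pow_add_C _ two_ne_zero

lemma degG : (GP k).degree = 2 :=
  Polynomial.degree_X_pow_add_C (n := 2) (by norm_num) (fA k)

lemma repT (w : Polynomial (MvPolynomial (Fin 2) k) ⧸ Ideal.span {GP k}) :
    ∃ p q : MvPolynomial (Fin 2) k,
      w = Ideal.Quotient.mk _ (Polynomial.C p + Polynomial.C q * Polynomial.X) := by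
  obtain ⟨P, rfl⟩ := Ideal.Quotient.mk_surjective w
  refine ⟨(P %ₘ GP k).coeff 0, (P %ₘ GP k).coeff 1, ?_⟩
  have h1 : Ideal.Quotient.mk (Ideal.span {GP k}) P = Ideal.Quotient.mk _ (P %ₘ GP k) := by
    rw [Ideal.Quotient.eq, Polynomial.modByMonic_eq_sub_mul_div P (GP k)]
    exact Ideal.mem_span_singleton.2 ⟨P /ₘ GP k, by ring⟩
  have h2 : P %ₘ GP k = Polynomial.C ((P %ₘ GP k).coeff 1) * Polynomial.X
      + Polynomial.C ((P %ₘ GP k).coeff 0) := by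
    refine Polynomial.eq_X_add_C_of_degree_le_one ?_
    have hlt := Polynomial.degree_modByMonic_lt P (monicG k)
    rw [degG k] at hlt
    exact Order.lt_succ_iff.mp (by exact_mod_cast hlt)
  rw [h1]
  conv_lhs => rw [h2]
  exact congrArg _ (by ring)

lemma uniqT (p q : MvPolynomial (Fin 2) k)
    (h : Ideal.Quotient.mk (Ideal.span {GP k})
      (Polynomial.C p + Polynomial.C q * Polynomial.X) = 0) : p = 0 ∧ q = 0 := by
  rw [Ideal.Quotient.eq_zero_iff_mem, Ideal.mem_span_singleton] at h
  have h0 : Polynomial.C p + Polynomial.C q * Polynomial.X = 0 := by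
    refine Polynomial.eq_zero_of_dvd_of_degree_lt h ?_
    rw [degG k, add_comm]
    exact lt_of_le_of_lt Polynomial.degree_linear_le (by norm_num)
  constructor
  · have := congrArg (fun r => Polynomial.coeff r 0) h0
    simpa using this
  · have := congrArg (fun r => Polynomial.coeff r 1) h0
    simpa using this

lemma eFG : (finSuccEquiv k 2) (FP k) = GP k := by
  rw [FP, GP, fA]
  rw [show (1 : Fin 3) = Fin.succ 0 from rfl, show (2 : Fin 3) = Fin.succ 1 from rfl]
  simp only [map_add, map_pow, finSuccEquiv_X_zero, finSuccEquiv_X_succ]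
  rw [add_assoc]


def Phi : (MvPolynomial (Fin 3) k ⧸ Ideal.span {FP k}) ≃+*
    (Polynomial (MvPolynomial (Fin 2) k) ⧸ Ideal.span {GP k}) :=
  Ideal.quotientEquiv _ _ (finSuccEquiv k 2).toRingEquiv (by
    rw [Ideal.map_span, Set.image_singleton]
    have : ((finSuccEquiv k 2).toRingEquiv : MvPolynomial (Fin 3) k →+* _) (FP k) = GP k :=
      eFG k
    rw [this])

lemma PhiMk (P : MvPolynomial (Fin 3) k) :
    Phi k (Ideal.Quotient.mk _ P) = Ideal.Quotient.mk _ ((finSuccEquiv k 2) P) :=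
  Ideal.quotientEquiv_mk _ _ _ _ P

lemma Phi_x : Phi k (Ideal.Quotient.mk _ (X 0)) = Ideal.Quotient.mk _ (Polynomial.X) := by
  rw [PhiMk, finSuccEquiv_X_zero]

lemma Phi_y : Phi k (Ideal.Quotient.mk _ (X 1)) = Ideal.Quotient.mk _ (Polynomial.C (X 0 : MvPolynomial (Fin 2) k)) := by
  rw [PhiMk, show (1 : Fin 3) = Fin.succ 0 from rfl, finSuccEquiv_X_succ]

lemma Phi_z : Phi k (Ideal.Quotient.mk _ (X 2)) = Ideal.Quotient.mk _ (Polynomial.C (X 1 : MvPolynomial (Fin 2) k)) := by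
  rw [PhiMk, show (2 : Fin 3) = Fin.succ 1 from rfl, finSuccEquiv_X_succ]



lemma repR (a : MvPolynomial (Fin 3) k ⧸ Ideal.span {FP k}) :
    ∃ p q : MvPolynomial (Fin 2) k, Phi k a =
      Ideal.Quotient.mk _ (Polynomial.C p + Polynomial.C q * Polynomial.X) :=
  repT k (Phi k a)

lemma hG0 : Ideal.Quotient.mk (Ideal.span {GP k}) (GP k) = 0 :=
  Ideal.Quotient.eq_zero_iff_mem.2 (Ideal.mem_span_singleton.2 dvd_rfl)

lemma lemZ (s : MvPolynomial (Fin 3) k ⧸ Ideal.span {FP k})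
    (h : s * (Ideal.Quotient.mk _ (X 2)) ^ 2 = 0) : s = 0 := by
  obtain ⟨p, q, hs⟩ := repR k s
  have hT := congrArg (Phi k) h
  simp only [map_add, map_mul, map_pow, map_zero, hs, Phi_z] at hT
  have key : Ideal.Quotient.mk (Ideal.span {GP k})
      (Polynomial.C (p * X 1 ^ 2) + Polynomial.C (q * X 1 ^ 2) * Polynomial.X) = 0 := by
    simp only [map_add, map_mul, map_pow]
    linear_combination hT
  obtain ⟨h1, h2⟩ := uniqT k _ _ key
  have hX1 : (X 1 : MvPolynomial (Fin 2) k) ^ 2 ≠ 0 := pow_ne_zero _ (X_ne_zero _)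
  have hp0 : p = 0 := by rcases mul_eq_zero.1 h1 with h' | h'; exact h'; exact absurd h' hX1
  have hq0 : q = 0 := by rcases mul_eq_zero.1 h2 with h' | h'; exact h'; exact absurd h' hX1
  apply (Phi k).injective
  rw [hs, hp0, hq0, map_zero]
  simp

lemma lemD (a b c : MvPolynomial (Fin 3) k ⧸ Ideal.span {FP k})
    (h : a * (Ideal.Quotient.mk _ (X 0)) ^ 2 + b * (Ideal.Quotient.mk _ (X 1)) ^ 2
      + c * (Ideal.Quotient.mk _ (X 2)) ^ 2 = 0) :
    ∃ s, b = a * (Ideal.Quotient.mk _ (X 1)) + s * (Ideal.Quotient.mk _ (X 2)) ^ 2 ∧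
      c = a * (Ideal.Quotient.mk _ (X 2)) ^ 3 + s * (Ideal.Quotient.mk _ (X 1)) ^ 2 := by
  obtain ⟨a0, a1, ha⟩ := repR k a
  obtain ⟨b0, b1, hb⟩ := repR k b
  obtain ⟨c0, c1, hc⟩ := repR k c
  have hT := congrArg (Phi k) h
  simp only [map_add, map_mul, map_pow, map_zero, ha, hb, hc, Phi_x, Phi_y, Phi_z] at hT
  have hGeq : Polynomial.X ^ 2 + Polynomial.C (X 0 : MvPolynomial (Fin 2) k) ^ 3
      + Polynomial.C (X 1 : MvPolynomial (Fin 2) k) ^ 5 = GP k := by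
    rw [GP, fA, map_add, map_pow, map_pow, ← add_assoc]
  have hG : Ideal.Quotient.mk (Ideal.span {GP k}) (Polynomial.X ^ 2
      + Polynomial.C (X 0 : MvPolynomial (Fin 2) k) ^ 3
      + Polynomial.C (X 1 : MvPolynomial (Fin 2) k) ^ 5) = 0 := by
    rw [hGeq]; exact hG0 k
  rw [map_add, map_add, map_pow, map_pow, map_pow] at hG
  have key : Ideal.Quotient.mk (Ideal.span {GP k})
      (Polynomial.C (b0 * X 0 ^ 2 + c0 * X 1 ^ 2 - a0 * (X 0 ^ 3 + X 1 ^ 5))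
        + Polynomial.C (b1 * X 0 ^ 2 + c1 * X 1 ^ 2 - a1 * (X 0 ^ 3 + X 1 ^ 5))
          * Polynomial.X) = 0 := by
    simp only [map_add, map_sub, map_mul, map_pow]
    linear_combination hT - (Ideal.Quotient.mk (Ideal.span {GP k}) (Polynomial.C a0)
      + Ideal.Quotient.mk (Ideal.span {GP k}) (Polynomial.C a1)
        * Ideal.Quotient.mk (Ideal.span {GP k}) Polynomial.X) * hG
  obtain ⟨h1, h2⟩ := uniqT k _ _ key
  obtain ⟨t0, hb0, hc0⟩ := keyA k a0 b0 c0 (by linear_combination -h1)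
  obtain ⟨t1, hb1, hc1⟩ := keyA k a1 b1 c1 (by linear_combination -h2)
  refine ⟨(Phi k).symm (Ideal.Quotient.mk _
    (Polynomial.C t0 + Polynomial.C t1 * Polynomial.X)), ?_, ?_⟩
  · apply (Phi k).injective
    simp only [map_add, map_mul, map_pow, ha, hb, Phi_y, Phi_z,
      (Phi k).apply_symm_apply, hb0, hb1]
    ring
  · apply (Phi k).injective
    simp only [map_add, map_mul, map_pow, ha, hc, Phi_y, Phi_z,
      (Phi k).apply_symm_apply, hc0, hc1]
    ring

end

end Aux

/-- Let `char k = 2` and `R = k[X,Y,Z]/(X²+Y³+Z⁵)`, graded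
with `deg X = 15, deg Y = 10, deg Z = 6`. Then
`Syz_R(X²,Y²,Z²) ≅ R(-30) ⊕ R(-32)` as graded `R`-modules, i.e. the syzygy
module is free on two homogeneous generators of total degrees `30` and `32`
(a generator of total degree `t` has components in
`𝒜 (t-30), 𝒜 (t-20), 𝒜 (t-12)`, since `deg X² = 30, deg Y² = 20,
deg Z² = 12`). -/
theorem stmt_18 {k : Type*} [Field k] [CharP k 2]
    (𝒜 : ℤ → Submodule k (MvPolynomial (Fin 3) k ⧸
      Ideal.span {MvPolynomial.X 0 ^ 2 + MvPolynomial.X 1 ^ 3 +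
        MvPolynomial.X 2 ^ 5}))
    [GradedAlgebra 𝒜]
    (hX : Ideal.Quotient.mk _ (MvPolynomial.X 0) ∈ 𝒜 15)
    (hY : Ideal.Quotient.mk _ (MvPolynomial.X 1) ∈ 𝒜 10)
    (hZ : Ideal.Quotient.mk _ (MvPolynomial.X 2) ∈ 𝒜 6) :
    let R := MvPolynomial (Fin 3) k ⧸
      Ideal.span {MvPolynomial.X 0 ^ 2 + MvPolynomial.X 1 ^ 3 +
        MvPolynomial.X 2 ^ 5}
    let x : R := Ideal.Quotient.mk _ (MvPolynomial.X 0)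
    let y : R := Ideal.Quotient.mk _ (MvPolynomial.X 1)
    let z : R := Ideal.Quotient.mk _ (MvPolynomial.X 2)
    ∃ bs : Module.Basis (Fin 2) R (LinearMap.ker (syzMap ![x ^ 2, y ^ 2, z ^ 2])),
      pieceCond 𝒜 (30 - 30) (30 - 20) (30 - 12) (bs 0 : Fin 3 → R) ∧
      pieceCond 𝒜 (32 - 30) (32 - 20) (32 - 12) (bs 1 : Fin 3 → R) := by
  intro R x y z
  have hx : x = Ideal.Quotient.mk _ (MvPolynomial.X 0) := rfl
  have hy : y = Ideal.Quotient.mk _ (MvPolynomial.X 1) := rfl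
  have hz : z = Ideal.Quotient.mk _ (MvPolynomial.X 2) := rfl
  have h2k : (2 : k) = 0 := by exact_mod_cast CharP.cast_eq_zero k 2
  have htwoR : (2 : R) = 0 := by
    rw [show (2 : R) = algebraMap k R (2 : k) from (map_ofNat _ 2).symm, h2k, map_zero]
  have hF : x ^ 2 + y ^ 3 + z ^ 5 = 0 := by
    have h1 : x ^ 2 + y ^ 3 + z ^ 5 = Ideal.Quotient.mk _
        (MvPolynomial.X 0 ^ 2 + MvPolynomial.X 1 ^ 3 + MvPolynomial.X 2 ^ 5 : MvPolynomial (Fin 3) k) := by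
      rw [hx, hy, hz, map_add, map_add, map_pow, map_pow, map_pow]
    rw [h1, Ideal.Quotient.eq_zero_iff_mem]
    exact Ideal.subset_span rfl
  set s1 : Fin 3 → R := ![1, y, z ^ 3] with hs1
  set s2 : Fin 3 → R := ![0, z ^ 2, y ^ 2] with hs2
  have syz_apply : ∀ v : Fin 3 → R,
      syzMap ![x ^ 2, y ^ 2, z ^ 2] v = v 0 * x ^ 2 + v 1 * y ^ 2 + v 2 * z ^ 2 := by
    intro v
    simp [syzMap, Fin.sum_univ_three]
  let ℓ : (Fin 2 → R) →ₗ[R] (Fin 3 → R) :=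
    { toFun := fun w => w 0 • s1 + w 1 • s2
      map_add' := by intro u v; funext i; simp [Pi.add_apply, smul_eq_mul]; ring
      map_smul' := by intro r w; funext i; simp [Pi.smul_apply, smul_eq_mul]; ring }
  have ℓapp : ∀ w, ℓ w = w 0 • s1 + w 1 • s2 := fun w => rfl
  have hmem : ∀ w, ℓ w ∈ LinearMap.ker (syzMap ![x ^ 2, y ^ 2, z ^ 2]) := by
    intro w
    rw [LinearMap.mem_ker, syz_apply, ℓapp]
    simp only [Pi.add_apply, Pi.smul_apply, hs1, hs2, Matrix.cons_val_zero,
      Matrix.cons_val_one, Matrix.head_cons, smul_eq_mul,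
      Matrix.cons_val_two, Matrix.tail_cons]
    linear_combination w 0 * hF + w 1 * y ^ 2 * z ^ 2 * htwoR
  let ℓ' := ℓ.codRestrict (LinearMap.ker (syzMap ![x ^ 2, y ^ 2, z ^ 2])) hmem
  have ℓ'app : ∀ w, (ℓ' w : Fin 3 → R) = w 0 • s1 + w 1 • s2 := fun w => rfl
  have hinj : Function.Injective ℓ' := by
    intro u v huv
    have h' : (ℓ' u : Fin 3 → R) = (ℓ' v : Fin 3 → R) := congrArg _ huv
    rw [ℓ'app, ℓ'app] at h'
    have h0 := congrFun h' 0
    have h1 := congrFun h' 1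
    simp only [Pi.add_apply, Pi.smul_apply, hs1, hs2, Matrix.cons_val_zero,
      Matrix.cons_val_one, Matrix.head_cons, smul_eq_mul, mul_one, mul_zero, add_zero] at h0 h1
    have hz2 : (u 1 - v 1) * (Ideal.Quotient.mk
        (Ideal.span {(MvPolynomial.X 0 ^ 2 + MvPolynomial.X 1 ^ 3 + MvPolynomial.X 2 ^ 5 : MvPolynomial (Fin 3) k)}) (MvPolynomial.X 2)) ^ 2 = 0 := by
      rw [← hz]
      linear_combination h1 - y * h0
    have := lemZ k _ hz2
    funext i
    fin_cases i
    · exact h0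
    · exact sub_eq_zero.mp this
  have hsurj : Function.Surjective ℓ' := by
    rintro ⟨v, hv⟩
    rw [LinearMap.mem_ker, syz_apply, hx, hy, hz] at hv
    obtain ⟨s, hbs, hcs⟩ := lemD k (v 0) (v 1) (v 2) hv
    refine ⟨![v 0, s], ?_⟩
    apply Subtype.ext
    rw [ℓ'app]
    funext i
    fin_cases i
    · simp [hs1, hs2]
      exact mul_zero _
    · simp only [Pi.add_apply, Pi.smul_apply, hs1, hs2, Matrix.cons_val_zero,
        Matrix.cons_val_one, Matrix.head_cons, smul_eq_mul]
      rw [hy, hz]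
      exact hbs.symm
    · simp only [Pi.add_apply, Pi.smul_apply, hs1, hs2, Matrix.cons_val_zero,
        Matrix.cons_val_one, Matrix.head_cons, smul_eq_mul,
        Matrix.cons_val_two, Matrix.tail_cons]
      rw [hy, hz]
      exact hcs.symm
  let eqv := LinearEquiv.ofBijective ℓ' ⟨hinj, hsurj⟩
  refine ⟨(Pi.basisFun R (Fin 2)).map eqv, ?_, ?_⟩
  · have hb0 : (((Pi.basisFun R (Fin 2)).map eqv) 0 : Fin 3 → R) = s1 := by
      rw [Module.Basis.map_apply]
      show (ℓ' ((Pi.basisFun R (Fin 2)) 0) : Fin 3 → R) = s1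
      rw [ℓ'app]
      funext i
      simp [Pi.basisFun_apply]
    rw [hb0]
    refine ⟨?_, ?_, ?_⟩
    · show (1 : R) ∈ 𝒜 (30 - 30)
      simpa using SetLike.one_mem_graded 𝒜
    · show y ∈ 𝒜 (30 - 20)
      simpa using hY
    · show z ^ 3 ∈ 𝒜 (30 - 12)
      have := SetLike.pow_mem_graded 3 hZ
      norm_num at this ⊢
      exact this
  · have hb1 : (((Pi.basisFun R (Fin 2)).map eqv) 1 : Fin 3 → R) = s2 := by
      rw [Module.Basis.map_apply]
      show (ℓ' ((Pi.basisFun R (Fin 2)) 1) : Fin 3 → R) = s2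
      rw [ℓ'app]
      funext i
      simp [Pi.basisFun_apply]
    rw [hb1]
    refine ⟨?_, ?_, ?_⟩
    · show (0 : R) ∈ 𝒜 (32 - 30)
      exact zero_mem _
    · show z ^ 2 ∈ 𝒜 (32 - 20)
      have := SetLike.pow_mem_graded 2 hZ
      norm_num at this ⊢
      exact this
    · show y ^ 2 ∈ 𝒜 (32 - 12)
      have := SetLike.pow_mem_graded 2 hY
      norm_num at this ⊢
      exact this
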